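/- Under a valid edge contraction C_e of Δ with strongly induced subcomplex Γ containing e, for any simplex σ of C_e(Δ) disjoint from C_e(Γ), the intersection C_e(Γ) ∩ st_σ(C_e(Δ)) is the image under the contraction of Γ ∩ st_σ(Δ); in particular if the latter consists of the faces of a single simplex, so does the former. -/
import Mathlib


open scoped Classical

namespace Fary

variable {V : Type*}

/-- A simplicial complex: a family of finite sets closed under taking subsets. -/
def IsComplex (K : Set (Finset V)) : Prop := ∀ s ∈ K, ∀ t ⊆ s, t ∈ K

/-- The star of a simplex `σ`: all subsets of simplices of `K` containing `σ`. -/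
def star (σ : Finset V) (K : Set (Finset V)) : Set (Finset V) :=
  {t | ∃ ρ ∈ K, σ ⊆ ρ ∧ t ⊆ ρ}

/-- The set of faces of a single simplex `τ`. -/
def facesOf (τ : Finset V) : Set (Finset V) := {ρ | ρ ⊆ τ}

/-- `Γ` is an induced subcomplex of `Δ`. -/
def Induced (Γ Δ : Set (Finset V)) : Prop :=
  Γ ⊆ Δ ∧ ∀ s ∈ Δ, (∀ v ∈ s, {v} ∈ Γ) → s ∈ Γ

/-- `Γ` is a strongly induced subcomplex of `Δ`: for every simplex of `Δ` not in `Γ`,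
the intersection of `Γ` with its star is the set of faces of a single simplex of `Γ`. -/
def StronglyInduced (Γ Δ : Set (Finset V)) : Prop :=
  Γ ⊆ Δ ∧ ∀ σ ∈ Δ, σ ∉ Γ → ∃ τ ∈ Γ, Γ ∩ star σ Δ = facesOf τ

/-- The derived (barycentric) subdivision: its simplices are the chains (under inclusion)
of nonempty simplices of `Δ`. -/
def derived (Δ : Set (Finset V)) : Set (Finset (Finset V)) :=
  {C | (↑C : Set (Finset V)) ⊆ {s | s ∈ Δ ∧ s.Nonempty} ∧
       IsChain (· ⊆ ·) (↑C : Set (Finset V))}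

/-- The biased derived subdivision of a pair `Γ ⊆ Δ`: simplices are
`τ ∪ {v_{σ₁}, …, v_{σ_k}}` with `τ ∈ Γ`, `σ₁ ⊂ … ⊂ σ_k` simplices of `Δ` not in `Γ`
and `τ ⊆ σ₁`. Old vertices are `Sum.inl`, the new vertex `v_σ` is `Sum.inr σ`. -/
def biased [DecidableEq V] (Γ Δ : Set (Finset V)) : Set (Finset (V ⊕ Finset V)) :=
  {t | ∃ τ ∈ Γ, ∃ C : Finset (Finset V),
    (↑C : Set (Finset V)) ⊆ {s | s ∈ Δ ∧ s ∉ Γ} ∧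
    IsChain (· ⊆ ·) (↑C : Set (Finset V)) ∧
    (∀ s ∈ C, τ ⊆ s) ∧
    t = τ.image Sum.inl ∪ C.image Sum.inr}

/-- The copy of a complex `Γ` over `V` inside the vertex type `V ⊕ Finset V`. -/
def inlify [DecidableEq V] (Γ : Set (Finset V)) : Set (Finset (V ⊕ Finset V)) :=
  {t | ∃ s ∈ Γ, t = s.image Sum.inl}

/-- The vertex map of the edge contraction identifying `b` with `a`. -/
def cmap [DecidableEq V] (a b : V) (v : V) : V := if v = b then a else v

/-- The edge contraction `C_e(K)` at `e = {a,b}`: images of simplices under `cmap a b`. -/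
def contract [DecidableEq V] (a b : V) (K : Set (Finset V)) : Set (Finset V) :=
  {t | ∃ s ∈ K, t = s.image (cmap a b)}

/-- A missing simplex of `K`: not a simplex, but all proper subsets are simplices. -/
def Missing (K : Set (Finset V)) (m : Finset V) : Prop := m ∉ K ∧ ∀ t ⊂ m, t ∈ K

/-- The stellar subdivision of `Δ` at `σ`, with new vertex `none`. -/
def stellar [DecidableEq V] (σ : Finset V) (Δ : Set (Finset V)) : Set (Finset (Option V)) :=
  {t | (∃ s ∈ Δ, ¬ σ ⊆ s ∧ t = s.image some) ∨
       (∃ τ ρ : Finset V, τ ⊂ σ ∧ ρ ∩ σ = ∅ ∧ σ ∪ ρ ∈ Δ ∧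
         t = insert none ((τ ∪ ρ).image some))}

/-- The edge subdivision `S_e` at the edge `e = {a,b}` is the stellar subdivision at `e`. -/
def subdivEdge [DecidableEq V] (a b : V) (K : Set (Finset V)) : Set (Finset (Option V)) :=
  stellar {a, b} K

/-- `s` is a facet (maximal simplex) of `K`. -/
def IsFacet (K : Set (Finset V)) (s : Finset V) : Prop :=
  s ∈ K ∧ ∀ t ∈ K, s ⊆ t → t = s

end Fary

namespace Fary

/-- Preimage-by-filter lemma: if `t ⊆ ρ.image f`, then filtering `ρ` to the
preimage of `t` and mapping back gives exactly `t`. -/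
lemma image_filter_preimage {V : Type*} [DecidableEq V] (f : V → V) (ρ t : Finset V)
    (h : t ⊆ ρ.image f) :
    (ρ.filter (fun w => f w ∈ t)).image f = t := by
  classical
  ext v
  simp only [Finset.mem_image, Finset.mem_filter]
  constructor
  · rintro ⟨w, ⟨-, hw⟩, rfl⟩; exact hw
  · intro hv
    obtain ⟨w, hwρ, hfw⟩ := Finset.mem_image.mp (h hv)
    exact ⟨w, ⟨hwρ, by rw [hfw]; exact hv⟩, hfw⟩

/-- Strongly induced implies induced. -/
lemma stronglyInduced_induced {V : Type*} (Γ Δ : Set (Finset V))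
    (hΓ : IsComplex Γ) (hstr : StronglyInduced Γ Δ) :
    ∀ s ∈ Δ, (∀ v ∈ s, ({v} : Finset V) ∈ Γ) → s ∈ Γ := by
  intro s hsΔ hv
  by_contra hs
  obtain ⟨τ, hτΓ, heq⟩ := hstr.2 s hsΔ hs
  have hsub : s ⊆ τ := by
    intro w hw
    have : ({w} : Finset V) ∈ Γ ∩ star s Δ :=
      ⟨hv w hw, s, hsΔ, subset_rfl, Finset.singleton_subset_iff.mpr hw⟩
    rw [heq] at this
    exact Finset.singleton_subset_iff.mp this
  exact hs (hΓ τ hτΓ s hsub)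

/-- for a simplex `σ` of `C_e(Δ)` disjoint from `C_e(Γ)`, the intersection
`C_e(Γ) ∩ st_σ(C_e(Δ))` is the image under the contraction of `Γ ∩ st_σ(Δ)`;
in particular if the latter consists of the faces of a single simplex, so does the
former. -/
theorem contract_star_inter {V : Type*} [DecidableEq V] (Γ Δ : Set (Finset V))
    (hΓ : IsComplex Γ) (hΔ : IsComplex Δ) (hstr : StronglyInduced Γ Δ)
    (a b : V) (hab : a ≠ b) (he : ({a, b} : Finset V) ∈ Γ)
    (hvalid : ¬ ∃ m : Finset V, Missing Γ m ∧ ({a, b} : Finset V) ⊆ m)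
    (σ : Finset V) (hσ : σ ∈ contract a b Δ)
    (hdisj : ∀ v ∈ σ, ({v} : Finset V) ∉ contract a b Γ) :
    contract a b Γ ∩ star σ (contract a b Δ)
      = {t | ∃ s ∈ Γ ∩ star σ Δ, t = s.image (cmap a b)} ∧
    (∀ τ ∈ Γ, Γ ∩ star σ Δ = facesOf τ →
      ∃ τ' ∈ contract a b Γ,
        contract a b Γ ∩ star σ (contract a b Δ) = facesOf τ') := by
  classical
  have hcne : ∀ v : V, cmap a b v ≠ b := by
    intro v
    unfold cmap
    split
    · exact hab
    · assumption
  -- b ∉ σ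
  have hbσ : b ∉ σ := by
    obtain ⟨s, _, rfl⟩ := hσ
    intro hb
    obtain ⟨w, -, hw⟩ := Finset.mem_image.mp hb
    exact hcne w hw
  -- a ∉ σ
  have haσ : a ∉ σ := by
    intro ha
    apply hdisj a ha
    refine ⟨{a}, hΓ _ he _ ?_, ?_⟩
    · intro x hx; simp at hx; simp [hx]
    · simp [cmap, hab]
  -- cmap fixes σ pointwise
  have hfix : ∀ v ∈ σ, cmap a b v = v := by
    intro v hv
    have : v ≠ b := fun h => hbσ (h ▸ hv)
    simp [cmap, this]
  -- singletons of images of Γ-simplices are in Γ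
  have hsing : ∀ s ∈ Γ, ∀ v ∈ s.image (cmap a b), ({v} : Finset V) ∈ Γ := by
    intro s hs v hv
    obtain ⟨u, hu, rfl⟩ := Finset.mem_image.mp hv
    by_cases hub : u = b
    · subst hub
      simp only [cmap, if_pos rfl]
      exact hΓ _ he _ (by intro x hx; simp at hx; simp [hx])
    · simp only [cmap, if_neg hub]
      exact hΓ s hs _ (Finset.singleton_subset_iff.mpr hu)
  have hmain : contract a b Γ ∩ star σ (contract a b Δ)
      = {t | ∃ s ∈ Γ ∩ star σ Δ, t = s.image (cmap a b)} := by
    ext t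
    constructor
    · rintro ⟨⟨s₀, hs₀, rfl⟩, ρ', ⟨ρ, hρΔ, rfl⟩, hσρ', htρ'⟩
      -- σ ⊆ ρ
      have hσρ : σ ⊆ ρ := by
        intro v hv
        obtain ⟨w, hwρ, hw⟩ := Finset.mem_image.mp (hσρ' hv)
        by_cases hwb : w = b
        · subst hwb
          exfalso
          apply haσ
          rw [← hw] at hv
          simpa [cmap] using hv
        · rwa [show w = v by simpa [cmap, hwb] using hw] at hwρ
      set t := s₀.image (cmap a b) with ht
      set s₁ := ρ.filter (fun w => cmap a b w ∈ t) with hs₁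
      have hs₁ρ : s₁ ⊆ ρ := Finset.filter_subset _ _
      have himg : s₁.image (cmap a b) = t := image_filter_preimage _ _ _ htρ'
      have hs₁Δ : s₁ ∈ Δ := hΔ ρ hρΔ s₁ hs₁ρ
      have hs₁Γ : s₁ ∈ Γ := by
        apply stronglyInduced_induced Γ Δ hΓ hstr s₁ hs₁Δ
        intro w hw
        have hwt : cmap a b w ∈ t := (Finset.mem_filter.mp hw).2
        by_cases hwb : w = b
        · subst hwb
          exact hΓ _ he _ (by intro x hx; simp at hx; simp [hx])
        · have : cmap a b w = w := by simp [cmap, hwb]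
          rw [← this]
          exact hsing s₀ hs₀ _ hwt
      exact ⟨s₁, ⟨hs₁Γ, ρ, hρΔ, hσρ, hs₁ρ⟩, himg.symm⟩
    · rintro ⟨s, ⟨hsΓ, ρ, hρΔ, hσρ, hsρ⟩, rfl⟩
      refine ⟨⟨s, hsΓ, rfl⟩, ρ.image (cmap a b), ⟨ρ, hρΔ, rfl⟩, ?_, Finset.image_subset_image hsρ⟩
      intro v hv
      exact Finset.mem_image.mpr ⟨v, hσρ hv, hfix v hv⟩
  refine ⟨hmain, ?_⟩
  intro τ hτΓ heq
  refine ⟨τ.image (cmap a b), ⟨τ, hτΓ, rfl⟩, ?_⟩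
  rw [hmain, heq]
  ext u
  constructor
  · rintro ⟨s, hsτ, rfl⟩
    exact Finset.image_subset_image hsτ
  · intro hu
    refine ⟨τ.filter (fun w => cmap a b w ∈ u), Finset.filter_subset _ _,
      (image_filter_preimage _ _ _ hu).symm⟩

end Fary
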